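/- Fibonomial Chu–Vandermonde identity: for all integers m, n ≥ 0 and k ≥ 0, the following holds in the real numbers: C(m+n, k)_F = Σ_{j=0}^{k} C(m, k−j)_F · C(n, j)_F · α^{n(k−j)} · β^{m j} · (−1)^{j(k−j)}. -/

import Mathlib

open goldenRatio Real

/-- The Fibonomial coefficient `C(n,k)_F = ∏_{r=1}^{k} F_{n-r+1}/F_r`, as a real number.
It equals `0` when `k > n` and `1` when `k = 0`. -/
noncomputable def fibonomial (n k : ℕ) : ℝ :=
  ∏ r ∈ Finset.range k, (Nat.fib (n - r) : ℝ) / (Nat.fib (r + 1) : ℝ)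

lemma fibonomial_zero (n : ℕ) : fibonomial n 0 = 1 := by simp [fibonomial]

lemma fibonomial_eq_zero {n k : ℕ} (h : n < k) : fibonomial n k = 0 := by
  apply Finset.prod_eq_zero (Finset.mem_range.mpr h); simp

lemma fib_ne_zero' (n : ℕ) : ((Nat.fib (n+1) : ℝ)) ≠ 0 :=
  by exact_mod_cast (Nat.fib_pos.mpr (Nat.succ_pos n)).ne'

lemma fibonomial_succ (n k : ℕ) :
    fibonomial n (k+1) = fibonomial n k * ((Nat.fib (n - k) : ℝ) / (Nat.fib (k+1) : ℝ)) := by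
  rw [fibonomial, Finset.prod_range_succ]; rfl

lemma fib_split (a b : ℕ) : (Nat.fib (a + b) : ℝ) = φ ^ b * Nat.fib a + ψ ^ a * Nat.fib b := by
  have h5 : Real.sqrt 5 ≠ 0 := by positivity
  rw [Real.coe_fib_eq, Real.coe_fib_eq, Real.coe_fib_eq, pow_add, pow_add]
  field_simp; ring

lemma fib_split' (a b : ℕ) : (Nat.fib (a + b) : ℝ) = ψ ^ b * Nat.fib a + φ ^ a * Nat.fib b := by
  have := fib_split b a
  rw [Nat.add_comm] at this
  linarith [this]

lemma L1 (N : ℕ) : ∀ k, k ≤ N + 1 →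
    fibonomial (N+1) k * (Nat.fib (N+1-k) : ℝ) = (Nat.fib (N+1) : ℝ) * fibonomial N k := by
  intro k
  induction k with
  | zero => simp [fibonomial_zero]
  | succ k ih =>
    intro hk
    have ih' := ih (by omega)
    rw [fibonomial_succ, fibonomial_succ]
    have e2 : N + 1 - (k+1) = N - k := by omega
    rw [e2]
    have hknz := fib_ne_zero' k
    field_simp
    calc fibonomial (N+1) k * (Nat.fib (N+1-k) : ℝ) * Nat.fib (N-k)
        = ((Nat.fib (N+1) : ℝ) * fibonomial N k) * Nat.fib (N-k) := by rw [ih']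
      _ = _ := by ring

lemma L2 (N : ℕ) : ∀ k, fibonomial (N+1) (k+1) * (Nat.fib (k+1) : ℝ)
    = (Nat.fib (N+1) : ℝ) * fibonomial N k := by
  intro k
  induction k with
  | zero =>
    rw [fibonomial_succ, fibonomial_zero, fibonomial_zero]
    have := fib_ne_zero' 0
    field_simp
    rw [Nat.sub_zero]
  | succ k ih =>
    rw [fibonomial_succ]
    have e1 : N + 1 - (k+1) = N - k := by omega
    rw [e1]
    have h1 := fib_ne_zero' (k+1)
    rw [fibonomial_succ N k]
    have : fibonomial (N+1) (k+1) = (Nat.fib (N+1) : ℝ) * fibonomial N k / Nat.fib (k+1) := by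
      rw [← ih]; field_simp [fib_ne_zero' k]
    rw [this]
    have h0 := fib_ne_zero' k
    field_simp

lemma P1 (N k : ℕ) : fibonomial (N+1) (k+1)
    = φ ^ (k+1) * fibonomial N (k+1) + ψ ^ (N-k) * fibonomial N k := by
  rcases le_or_gt k N with h | h
  · have hL1 := L1 N (k+1) (by omega)
    have hL2 := L2 N k
    have e : N + 1 - (k+1) = N - k := by omega
    rw [e] at hL1
    have hsplit : (Nat.fib (N+1) : ℝ) = φ ^ (k+1) * Nat.fib (N-k) + ψ ^ (N-k) * Nat.fib (k+1) := by
      have := fib_split (N-k) (k+1)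
      have e2 : (N-k) + (k+1) = N + 1 := by omega
      rw [e2] at this; exact this
    have hNnz := fib_ne_zero' N
    apply mul_left_cancel₀ hNnz
    calc (Nat.fib (N+1) : ℝ) * fibonomial (N+1) (k+1)
        = fibonomial (N+1) (k+1) * (φ ^ (k+1) * Nat.fib (N-k) + ψ ^ (N-k) * Nat.fib (k+1)) := by
          rw [← hsplit]; ring
      _ = φ ^ (k+1) * (fibonomial (N+1) (k+1) * Nat.fib (N-k))
          + ψ ^ (N-k) * (fibonomial (N+1) (k+1) * Nat.fib (k+1)) := by ring
      _ = _ := by rw [hL1, hL2]; ring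
  · rw [fibonomial_eq_zero (by omega : N+1 < k+1), fibonomial_eq_zero (by omega : N < k+1),
      fibonomial_eq_zero h]
    ring

lemma P2 (N k : ℕ) : fibonomial (N+1) (k+1)
    = ψ ^ (k+1) * fibonomial N (k+1) + φ ^ (N-k) * fibonomial N k := by
  rcases le_or_gt k N with h | h
  · have hL1 := L1 N (k+1) (by omega)
    have hL2 := L2 N k
    have e : N + 1 - (k+1) = N - k := by omega
    rw [e] at hL1
    have hsplit : (Nat.fib (N+1) : ℝ) = ψ ^ (k+1) * Nat.fib (N-k) + φ ^ (N-k) * Nat.fib (k+1) := by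
      have := fib_split' (N-k) (k+1)
      have e2 : (N-k) + (k+1) = N + 1 := by omega
      rw [e2] at this; exact this
    have hNnz := fib_ne_zero' N
    apply mul_left_cancel₀ hNnz
    calc (Nat.fib (N+1) : ℝ) * fibonomial (N+1) (k+1)
        = fibonomial (N+1) (k+1) * (ψ ^ (k+1) * Nat.fib (N-k) + φ ^ (N-k) * Nat.fib (k+1)) := by
          rw [← hsplit]; ring
      _ = ψ ^ (k+1) * (fibonomial (N+1) (k+1) * Nat.fib (N-k))
          + φ ^ (N-k) * (fibonomial (N+1) (k+1) * Nat.fib (k+1)) := by ring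
      _ = _ := by rw [hL1, hL2]; ring
  · rw [fibonomial_eq_zero (by omega : N+1 < k+1), fibonomial_eq_zero (by omega : N < k+1),
      fibonomial_eq_zero h]
    ring

lemma shift_pow (a b c d : ℕ) :
    φ ^ (a+d) * ψ ^ (b+d) * (-1:ℝ) ^ (c+d) = φ ^ a * ψ ^ b * (-1:ℝ) ^ c := by
  have h1 : φ ^ d * ψ ^ d * (-1:ℝ) ^ d = 1 := by
    rw [← mul_pow, ← mul_pow, goldenRatio_mul_goldenConj]
    norm_num
  calc φ ^ (a+d) * ψ ^ (b+d) * (-1:ℝ) ^ (c+d)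
      = (φ ^ a * ψ ^ b * (-1:ℝ) ^ c) * (φ ^ d * ψ ^ d * (-1:ℝ) ^ d) := by
        rw [pow_add, pow_add, pow_add]; ring
    _ = _ := by rw [h1, mul_one]

lemma key_pow (a b c a' b' c' : ℕ) (h1 : a + c' = a' + c) (h2 : b + c' = b' + c) :
    φ ^ a * ψ ^ b * (-1:ℝ) ^ c = φ ^ a' * ψ ^ b' * (-1:ℝ) ^ c' := by
  rcases le_total c c' with h | h
  · obtain ⟨d, rfl⟩ : ∃ d, c' = c + d := ⟨c' - c, by omega⟩
    obtain ⟨ha, hb⟩ : a' = a + d ∧ b' = b + d := by omega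
    rw [ha, hb, shift_pow]
  · obtain ⟨d, rfl⟩ : ∃ d, c = c' + d := ⟨c - c', by omega⟩
    obtain ⟨ha, hb⟩ : a = a' + d ∧ b = b' + d := by omega
    rw [ha, hb, shift_pow]

lemma term_eq (m n k j : ℕ) (hj : j < k) :
    ψ ^ (m-(k-1-j)) * fibonomial m (k-1-j) * fibonomial n j * φ ^ (n*(k-j)) *
      ψ ^ ((m+1)*j) * (-1:ℝ) ^ (j*(k-j))
  = φ ^ (n-j) * fibonomial n j * fibonomial m (k-(j+1)) * φ ^ ((n+1)*(k-(j+1))) *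
      ψ ^ (m*(j+1)) * (-1:ℝ) ^ ((j+1)*(k-(j+1))) := by
  have ek : k - (j+1) = k - 1 - j := by omega
  rw [ek]
  by_cases hn : n < j
  · rw [fibonomial_eq_zero hn]; ring
  push_neg at hn
  by_cases hm : m < k - 1 - j
  · rw [fibonomial_eq_zero hm]; ring
  push_neg at hm
  obtain ⟨u, rfl⟩ : ∃ u, n = j + u := ⟨n - j, by omega⟩
  obtain ⟨v, rfl⟩ : ∃ v, k = j + v + 1 := ⟨k - j - 1, by omega⟩
  obtain ⟨w, rfl⟩ : ∃ w, m = v + w := ⟨m - v, by omega⟩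
  simp only [show j + v + 1 - 1 - j = v from by omega, show j + v + 1 - j = v + 1 from by omega,
    show v + w - v = w from by omega, show j + u - j = u from by omega]
  have hE := key_pow ((j+u)*(v+1)) (w+(v+w+1)*j) (j*(v+1)) (u+(j+u+1)*v) ((v+w)*(j+1)) ((j+1)*v)
    (by ring) (by ring)
  linear_combination (fibonomial (v+w) v * fibonomial (j+u) j) * hE

lemma crux (m n k : ℕ) :
    (∑ j ∈ Finset.range (k+1), fibonomial (m+1) (k-j) * fibonomial n j *
      φ ^ (n*(k-j)) * ψ ^ ((m+1)*j) * (-1:ℝ) ^ (j*(k-j)))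
  = ∑ j ∈ Finset.range (k+1), fibonomial m (k-j) * fibonomial (n+1) j *
      φ ^ ((n+1)*(k-j)) * ψ ^ (m*j) * (-1:ℝ) ^ (j*(k-j)) := by
  have hL : ∀ j ∈ Finset.range (k+1),
      fibonomial (m+1) (k-j) * fibonomial n j * φ ^ (n*(k-j)) * ψ ^ ((m+1)*j) *
        (-1:ℝ) ^ (j*(k-j))
      = (φ ^ (k-j) * fibonomial m (k-j) * fibonomial n j * φ ^ (n*(k-j)) * ψ ^ ((m+1)*j) *
          (-1:ℝ) ^ (j*(k-j)))
        + (if j < k then ψ ^ (m-(k-1-j)) * fibonomial m (k-1-j) * fibonomial n j *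
            φ ^ (n*(k-j)) * ψ ^ ((m+1)*j) * (-1:ℝ) ^ (j*(k-j)) else 0) := by
    intro j hj
    rcases lt_or_ge j k with h | h
    · rw [if_pos h]
      have e : k - j = (k - j - 1) + 1 := by omega
      have e2 : k - j - 1 = k - 1 - j := by omega
      rw [e, P1 m (k-j-1), e2]
      ring
    · have hjk : j = k := by
        have := Finset.mem_range.mp hj; omega
      subst hjk
      rw [if_neg (lt_irrefl j)]
      simp [fibonomial_zero]
  have hR : ∀ j ∈ Finset.range (k+1),
      fibonomial m (k-j) * fibonomial (n+1) j * φ ^ ((n+1)*(k-j)) * ψ ^ (m*j) *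
        (-1:ℝ) ^ (j*(k-j))
      = (ψ ^ j * fibonomial n j * fibonomial m (k-j) * φ ^ ((n+1)*(k-j)) * ψ ^ (m*j) *
          (-1:ℝ) ^ (j*(k-j)))
        + (if 0 < j then φ ^ (n-(j-1)) * fibonomial n (j-1) * fibonomial m (k-j) *
            φ ^ ((n+1)*(k-j)) * ψ ^ (m*j) * (-1:ℝ) ^ (j*(k-j)) else 0) := by
    intro j _
    rcases Nat.eq_zero_or_pos j with h | h
    · subst h
      rw [if_neg (lt_irrefl 0)]
      simp [fibonomial_zero]
    · rw [if_pos h]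
      have e : j = (j - 1) + 1 := by omega
      rw [e, P2 n (j-1), ← e]
      ring
  rw [Finset.sum_congr rfl hL, Finset.sum_congr rfl hR,
    Finset.sum_add_distrib, Finset.sum_add_distrib]
  congr 1
  · apply Finset.sum_congr rfl
    intro j _
    rw [show (n+1)*(k-j) = n*(k-j) + (k-j) from by ring,
      show (m+1)*j = m*j + j from by ring, pow_add, pow_add]
    ring
  · rw [Finset.sum_range_succ, if_neg (lt_irrefl k), add_zero,
      Finset.sum_range_succ' _ k, if_neg (lt_irrefl 0), add_zero]
    apply Finset.sum_congr rfl
    intro j hj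
    have hjk : j < k := Finset.mem_range.mp hj
    rw [if_pos hjk, if_pos (Nat.succ_pos j), Nat.add_sub_cancel]
    exact term_eq m n k j hjk

theorem fibonomial_chu_vandermonde (m n k : ℕ) :
    fibonomial (m + n) k =
      ∑ j ∈ Finset.range (k + 1),
        fibonomial m (k - j) * fibonomial n j *
          ((1 + Real.sqrt 5) / 2) ^ (n * (k - j)) *
          ((1 - Real.sqrt 5) / 2) ^ (m * j) *
          (-1 : ℝ) ^ (j * (k - j)) := by
  induction n generalizing m with
  | zero =>
    rw [Nat.add_zero, Finset.sum_eq_single 0]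
    · simp [fibonomial_zero]
    · intro j hj hj0
      rw [fibonomial_eq_zero (Nat.pos_of_ne_zero hj0)]; ring
    · intro h; exact absurd (Finset.mem_range.mpr (Nat.succ_pos k)) h
  | succ n ih =>
    rw [show m + (n+1) = (m+1) + n from by omega, ih (m+1)]
    exact crux m n k
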